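/- Let p be a probability mass function on the positive integers with p_j monotonically nonincreasing, and suppose there exist M > 0 and α ∈ (0,1) with p_j ≤ M j^{−1/α} for all j. Let X, Z₁, ..., Z_n be i.i.d. with distribution p and set m_X = #{i ≤ n : Z_i = X}, so that conditionally on X, m_X ~ Binomial(n, p(X)). Then there exists a constant C > 0 such that for all n ≥ 2, | E_X[ p(X) ( Var[ 1/(m_X + 1) | X ] − 2 Cov[ J(n) − J(m_X), 1/(m_X + 1) | X ] ) ] | ≤ C (log n) / n^{2−α}. -/

import Mathlib

open Filter Asymptotics

/-- `J m` is the `m`-th harmonic number, with `J 0 = 0`. -/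
noncomputable def J (m : ℕ) : ℝ := ∑ k ∈ Finset.range m, (1 : ℝ) / (k + 1)

/-- `mcount x i` is the number of occurrences of the symbol `x i` in the sample `x`. -/
def mcount {n : ℕ} (x : Fin n → ℕ+) (i : Fin n) : ℕ :=
  (Finset.univ.filter fun k => x k = x i).card

/-- The harmonic entropy estimator. -/
noncomputable def Hhat {n : ℕ} (x : Fin n → ℕ+) : ℝ :=
  ((n : ℝ))⁻¹ * ∑ i, (J (n - 1) - J (mcount x i - 1))

/-- The probability that an i.i.d. sample of size `n` from the pmf `p` equals `x`. -/
noncomputable def Pn {n : ℕ} (p : ℕ+ → ℝ) (x : Fin n → ℕ+) : ℝ := ∏ i, p (x i)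

/-- The expectation of the harmonic entropy estimator over an i.i.d. sample of size `n`. -/
noncomputable def EHhat (p : ℕ+ → ℝ) (n : ℕ) : ℝ := ∑' x : Fin n → ℕ+, Pn p x * Hhat x

/-- The Shannon entropy of the pmf `p`. -/
noncomputable def Hent (p : ℕ+ → ℝ) : ℝ := -∑' j : ℕ+, p j * Real.log (p j)

/-- Expectation of `f M` for `M ~ Binomial(n, q)`. -/
noncomputable def Bexp (n : ℕ) (q : ℝ) (f : ℕ → ℝ) : ℝ :=
  ∑ m ∈ Finset.range (n + 1), f m * (n.choose m : ℝ) * q ^ m * (1 - q) ^ (n - m)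




lemma Bexp_const (n : ℕ) (q c : ℝ) : Bexp n q (fun _ => c) = c := by
  have h : ((q + (1 - q)) : ℝ) ^ n = ∑ m ∈ Finset.range (n + 1), q ^ m * (1 - q) ^ (n - m) * (n.choose m : ℝ) :=
    add_pow q (1 - q) n
  have : Bexp n q (fun _ => c) = c * ((q + (1 - q)) ^ n) := by
    rw [h, Finset.mul_sum, Bexp]
    exact Finset.sum_congr rfl (fun m _ => by ring)
  simp at this
  simpa using this

lemma Bexp_mono (n : ℕ) (q : ℝ) (f g : ℕ → ℝ) (hq0 : 0 ≤ q) (hq1 : q ≤ 1)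
    (h : ∀ m ≤ n, f m ≤ g m) : Bexp n q f ≤ Bexp n q g := by
  apply Finset.sum_le_sum
  intro m hm
  have hm' : m ≤ n := Nat.lt_succ_iff.mp (Finset.mem_range.mp hm)
  have h1q : (0:ℝ) ≤ 1 - q := by linarith
  have hw : (0:ℝ) ≤ (n.choose m : ℝ) * q ^ m * (1 - q) ^ (n - m) := by positivity
  calc f m * (n.choose m : ℝ) * q ^ m * (1 - q) ^ (n - m)
      = f m * ((n.choose m : ℝ) * q ^ m * (1 - q) ^ (n - m)) := by ring
    _ ≤ g m * ((n.choose m : ℝ) * q ^ m * (1 - q) ^ (n - m)) :=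
        mul_le_mul_of_nonneg_right (h m hm') hw
    _ = g m * (n.choose m : ℝ) * q ^ m * (1 - q) ^ (n - m) := by ring

lemma Bexp_le (n : ℕ) (q c : ℝ) (f : ℕ → ℝ) (hq0 : 0 ≤ q) (hq1 : q ≤ 1)
    (h : ∀ m ≤ n, f m ≤ c) : Bexp n q f ≤ c := by
  have := Bexp_mono n q f (fun _ => c) hq0 hq1 h
  rwa [Bexp_const] at this

lemma Bexp_nonneg (n : ℕ) (q : ℝ) (f : ℕ → ℝ) (hq0 : 0 ≤ q) (hq1 : q ≤ 1)
    (h : ∀ m ≤ n, 0 ≤ f m) : 0 ≤ Bexp n q f := by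
  have := Bexp_mono n q (fun _ => 0) f hq0 hq1 h
  rwa [Bexp_const] at this


lemma Bexp_shift (n : ℕ) (q : ℝ) (f : ℕ → ℝ) :
    ((n : ℝ) + 1) * q * Bexp n q (fun m => f (m + 1) / ((m : ℝ) + 1))
      = Bexp (n + 1) q f - f 0 * (1 - q) ^ (n + 1) := by
  have hexp : Bexp (n+1) q f
      = ∑ m ∈ Finset.range (n+1), f (m+1) * ((n+1).choose (m+1) : ℝ) * q ^ (m+1) * (1-q) ^ (n - m)
        + f 0 * (1 - q) ^ (n + 1) := by
    rw [Bexp, Finset.sum_range_succ']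
    simp [Nat.succ_sub_succ]
  rw [hexp, Bexp, Finset.mul_sum]
  rw [add_sub_cancel_right]
  apply Finset.sum_congr rfl
  intro m _
  have hc' : ((n:ℝ)+1) * (n.choose m : ℝ) = ((n+1).choose (m+1) : ℝ) * ((m:ℝ)+1) := by
    exact_mod_cast congrArg (Nat.cast (R := ℝ)) (Nat.add_one_mul_choose_eq n m)
  have hm1 : ((m:ℝ)+1) ≠ 0 := by positivity
  have hinv : ((m:ℝ)+1)⁻¹ * ((m:ℝ)+1) = 1 := inv_mul_cancel₀ hm1
  linear_combination (f (m+1) * q^(m+1) * (1-q)^(n-m) * ((m:ℝ)+1)⁻¹) * hc'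
    + (f (m+1) * (((n+1).choose (m+1) : ℝ)) * q^(m+1) * (1-q)^(n-m)) * hinv


lemma Bexp_pascal (n : ℕ) (q : ℝ) (h : ℕ → ℝ) :
    Bexp (n+1) q h = q * Bexp n q (fun m => h (m+1)) + (1 - q) * Bexp n q h := by
  have hexp : Bexp (n+1) q h
      = ∑ m ∈ Finset.range (n+1), h (m+1) * ((n+1).choose (m+1) : ℝ) * q ^ (m+1) * (1-q) ^ (n - m)
        + h 0 * (1 - q) ^ (n + 1) := by
    rw [Bexp, Finset.sum_range_succ']
    simp [Nat.succ_sub_succ]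
  have hsplit : ∀ m ∈ Finset.range (n+1),
      h (m+1) * ((n+1).choose (m+1) : ℝ) * q ^ (m+1) * (1-q) ^ (n - m)
      = h (m+1) * (n.choose m : ℝ) * q ^ (m+1) * (1-q) ^ (n - m)
        + h (m+1) * (n.choose (m+1) : ℝ) * q ^ (m+1) * (1-q) ^ (n - m) := by
    intro m _
    have : (((n+1).choose (m+1) : ℕ) : ℝ) = (n.choose m : ℝ) + (n.choose (m+1) : ℝ) := by
      exact_mod_cast congrArg (Nat.cast (R := ℝ)) (Nat.choose_succ_succ n m)
    rw [this]; ring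
  have h1 : ∑ m ∈ Finset.range (n+1), h (m+1) * (n.choose m : ℝ) * q ^ (m+1) * (1-q) ^ (n - m)
      = q * Bexp n q (fun m => h (m+1)) := by
    rw [Bexp, Finset.mul_sum]
    exact Finset.sum_congr rfl (fun m _ => by ring)
  have h2 : ∑ m ∈ Finset.range (n+1), h (m+1) * (n.choose (m+1) : ℝ) * q ^ (m+1) * (1-q) ^ (n - m)
        + h 0 * (1 - q) ^ (n + 1)
      = (1 - q) * Bexp n q h := by
    have hA : ∑ m ∈ Finset.range (n+1), h (m+1) * (n.choose (m+1) : ℝ) * q ^ (m+1) * (1-q) ^ (n - m)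
        = ∑ m ∈ Finset.range n, h (m+1) * (n.choose (m+1) : ℝ) * q ^ (m+1) * (1-q) ^ (n - m) := by
      rw [Finset.sum_range_succ]
      simp [Nat.choose_succ_self]
    have hB : (1 - q) * Bexp n q h
        = ∑ m ∈ Finset.range n, (1-q) * (h (m+1) * (n.choose (m+1) : ℝ) * q ^ (m+1) * (1-q) ^ (n - (m+1)))
          + (1-q) * (h 0 * (n.choose 0 : ℝ) * q ^ 0 * (1-q) ^ (n - 0)) := by
      rw [Bexp, Finset.mul_sum, Finset.sum_range_succ']
    rw [hA, hB]
    congr 1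
    · apply Finset.sum_congr rfl
      intro m hm
      have hm' : m < n := Finset.mem_range.mp hm
      have hnm : n - m = (n - (m+1)) + 1 := by omega
      rw [hnm]; ring
    · simp [pow_succ]; ring
  rw [hexp, Finset.sum_congr rfl hsplit, Finset.sum_add_distrib, h1, ← h2]; ring


lemma J_zero : J 0 = 0 := by simp [J]

lemma J_succ (m : ℕ) : J (m+1) = J m + 1/((m:ℝ)+1) := by
  rw [J, Finset.sum_range_succ]; rfl

lemma J_nonneg (m : ℕ) : 0 ≤ J m := by
  apply Finset.sum_nonneg; intro k _; positivity

lemma J_mono {a b : ℕ} (h : a ≤ b) : J a ≤ J b := by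
  apply Finset.sum_le_sum_of_subset_of_nonneg (Finset.range_subset_range.mpr h)
  intro k _ _; positivity

lemma J_diff_nonneg (k : ℕ) : 0 ≤ J k - J (k-1) := by
  cases k with
  | zero => simp
  | succ m => simp only [Nat.add_sub_cancel, J_succ]
              have : (0:ℝ) < (m:ℝ)+1 := by positivity
              have h2 : (0:ℝ) ≤ 1/((m:ℝ)+1) := by positivity
              linarith

lemma J_diff_le (k : ℕ) : J k - J (k-1) ≤ 2 * (1/((k:ℝ)+1)) := by
  cases k with
  | zero => norm_num [J_zero]
  | succ m =>
      simp only [Nat.add_sub_cancel, J_succ]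
      have h1 : (0:ℝ) < (m:ℝ)+1 := by positivity
      have h2 : (0:ℝ) < ((m+1:ℕ):ℝ)+1 := by positivity
      push_cast
      have h3 : J m + 1 / ((m:ℝ) + 1) - J m = 1/((m:ℝ)+1) := by ring
      rw [h3, div_le_iff₀ h1, mul_comm, ← mul_assoc]
      rw [mul_one_div, le_div_iff₀ (by positivity : (0:ℝ) < (m:ℝ)+1+1)]
      nlinarith

lemma Bexp_congr (n : ℕ) (q : ℝ) (f g : ℕ → ℝ) (h : ∀ m, f m = g m) :
    Bexp n q f = Bexp n q g := by
  unfold Bexp; exact Finset.sum_congr rfl (fun m _ => by rw [h])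

lemma Bexp_add (n : ℕ) (q : ℝ) (f g : ℕ → ℝ) :
    Bexp n q (fun m => f m + g m) = Bexp n q f + Bexp n q g := by
  unfold Bexp; rw [← Finset.sum_add_distrib]
  exact Finset.sum_congr rfl (fun m _ => by ring)

lemma Bexp_smul (n : ℕ) (q c : ℝ) (f : ℕ → ℝ) :
    Bexp n q (fun m => c * f m) = c * Bexp n q f := by
  unfold Bexp; rw [Finset.mul_sum]
  exact Finset.sum_congr rfl (fun m _ => by ring)

/-- identity: `(n+1) q E[1/(m+1)] = 1 - (1-q)^(n+1)`. -/
lemma Bexp_inv_id (n : ℕ) (q : ℝ) :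
    ((n:ℝ)+1) * q * Bexp n q (fun m => 1 / ((m:ℝ) + 1)) = 1 - (1-q)^(n+1) := by
  have h := Bexp_shift n q (fun _ => (1:ℝ))
  rw [Bexp_const] at h
  rw [h]; ring

set_option maxHeartbeats 1000000 in
lemma key (n : ℕ) (q : ℝ) (hq : 0 < q) (hq1 : q ≤ 1) :
    |(Bexp n q (fun m => (1 / (m + 1 : ℝ)) ^ 2)
        - (Bexp n q (fun m => 1 / (m + 1 : ℝ))) ^ 2)
      - 2 * (Bexp n q (fun m => (J n - J m) * (1 / (m + 1 : ℝ)))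
        - Bexp n q (fun m => J n - J m) * Bexp n q (fun m => 1 / (m + 1 : ℝ)))|
      ≤ (8 + 4 * J n) * min 1 ((((n:ℝ)+1) * q)⁻¹ ^ 2) := by
  have h1q : (0:ℝ) ≤ 1 - q := by linarith
  set x := ((n:ℝ)+1) * q with hxdef
  have hx : 0 < x := by positivity
  set EB := Bexp n q (fun m => 1 / (m + 1 : ℝ)) with hEBdef
  set EB2 := Bexp n q (fun m => (1 / (m + 1 : ℝ)) ^ 2) with hEB2def
  set EA := Bexp n q (fun m => J n - J m) with hEAdef
  set EAB := Bexp n q (fun m => (J n - J m) * (1 / (m + 1 : ℝ))) with hEABdef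
  have hJ : 0 ≤ J n := J_nonneg n
  -- elementary bounds
  have hB01 : ∀ m : ℕ, (0:ℝ) ≤ 1 / ((m:ℝ) + 1) ∧ 1 / ((m:ℝ) + 1) ≤ 1 := by
    intro m
    constructor
    · positivity
    · rw [div_le_one (by positivity)]
      have : (0:ℝ) ≤ (m:ℝ) := Nat.cast_nonneg m
      linarith
  have hEB0 : 0 ≤ EB := Bexp_nonneg n q _ hq.le hq1 (fun m _ => (hB01 m).1)
  have hEB1 : EB ≤ 1 := Bexp_le n q 1 _ hq.le hq1 (fun m _ => (hB01 m).2)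
  have hEB20 : 0 ≤ EB2 := Bexp_nonneg n q _ hq.le hq1 (fun m _ => by positivity)
  have hEB21 : EB2 ≤ 1 := Bexp_le n q 1 _ hq.le hq1
    (fun m _ => pow_le_one₀ (hB01 m).1 (hB01 m).2)
  have hEA0 : 0 ≤ EA := Bexp_nonneg n q _ hq.le hq1
    (fun m hm => by have := J_mono hm; linarith)
  have hEA1 : EA ≤ J n := Bexp_le n q (J n) _ hq.le hq1
    (fun m _ => by have := J_nonneg m; linarith)
  have hEAB0 : 0 ≤ EAB := Bexp_nonneg n q _ hq.le hq1
    (fun m hm => mul_nonneg (by have := J_mono hm; linarith) (hB01 m).1)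
  have hEAB1 : EAB ≤ J n := Bexp_le n q (J n) _ hq.le hq1 (fun m hm => by
    have h1 : J n - J m ≤ J n := by have := J_nonneg m; linarith
    have h2 : 0 ≤ J n - J m := by have := J_mono hm; linarith
    nlinarith [(hB01 m).1, (hB01 m).2])
  have hEBsq : EB ^ 2 ≤ 1 := pow_le_one₀ hEB0 hEB1
  have hEAEB0 : 0 ≤ EA * EB := mul_nonneg hEA0 hEB0
  have hEAEB1 : EA * EB ≤ J n := by nlinarith
  -- crude bound
  have hcrude : |EB2 - EB ^ 2 - 2 * (EAB - EA * EB)| ≤ 2 + 4 * J n := by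
    rw [abs_le]
    constructor
    · nlinarith
    · nlinarith
  -- identities
  have hb1 : x * EB = 1 - (1-q)^(n+1) := Bexp_inv_id n q
  have hw0 : (0:ℝ) ≤ (1-q)^(n+1) := pow_nonneg h1q _
  have hw1 : (1-q)^(n+1) ≤ 1 := pow_le_one₀ h1q (by linarith)
  have hxEB0 : 0 ≤ x * EB := by rw [hb1]; linarith
  have hxEB1 : x * EB ≤ 1 := by rw [hb1]; linarith
  -- level n+1 bound on E[1/(m+1)]
  have hB' : 0 ≤ Bexp (n+1) q (fun k => 1 / ((k:ℝ) + 1)) :=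
    Bexp_nonneg (n+1) q _ hq.le hq1 (fun m _ => (hB01 m).1)
  have hxB' : x * Bexp (n+1) q (fun k => 1 / ((k:ℝ) + 1)) ≤ 1 := by
    have hid := Bexp_inv_id (n+1) q
    have hw0' : (0:ℝ) ≤ (1-q)^(n+2) := pow_nonneg h1q _
    have hle : (((n+1:ℕ):ℝ)+1) * q * Bexp (n+1) q (fun k => 1 / ((k:ℝ) + 1)) ≤ 1 := by
      rw [hid]; linarith
    have hxle : x ≤ (((n+1:ℕ):ℝ)+1) * q := by
      push_cast; nlinarith
    nlinarith [mul_nonneg (sub_nonneg.mpr hxle) hB']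
  -- EB2 identity
  have hb2 : x * EB2 = Bexp (n+1) q (fun k => 1 / (k:ℝ)) := by
    have h := Bexp_shift n q (fun k => 1 / (k:ℝ))
    beta_reduce at h
    have hcg : Bexp n q (fun m => (1 / ((m+1:ℕ):ℝ)) / ((m:ℝ) + 1)) = EB2 := by
      apply Bexp_congr
      intro m
      push_cast
      ring
    have h0 : (1 / ((0:ℕ):ℝ)) * (1-q)^(n+1) = 0 := by norm_num
    rw [hcg, h0, sub_zero] at h
    exact h
  have hinv_le : ∀ k : ℕ, 1 / (k:ℝ) ≤ 2 * (1 / ((k:ℝ)+1)) := by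
    intro k
    cases k with
    | zero => norm_num
    | succ m =>
        have h1 : (0:ℝ) < (m:ℝ)+1 := by positivity
        have h2 : (0:ℝ) < ((m:ℝ)+1)+1 := by positivity
        push_cast
        rw [div_le_iff₀ h1, mul_one_div, div_mul_eq_mul_div, le_div_iff₀ h2]
        nlinarith
  have hb2le : Bexp (n+1) q (fun k => 1 / (k:ℝ))
      ≤ 2 * Bexp (n+1) q (fun k => 1 / ((k:ℝ)+1)) := by
    rw [← Bexp_smul]
    exact Bexp_mono (n+1) q _ _ hq.le hq1 (fun k _ => hinv_le k)
  have hEB2xx : x * (x * EB2) ≤ 2 := by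
    rw [hb2]
    nlinarith [mul_le_mul_of_nonneg_left hb2le hx.le]
  have hEB2x0 : 0 ≤ x * (x * EB2) := by positivity
  -- EAB identity
  set R := Bexp (n+1) q (fun k => J k - J (k-1)) with hRdef
  have hb3 : x * EAB = EA - q * EB + R - J n * (1-q)^(n+1) := by
    have h := Bexp_shift n q (fun k => J n - J (k-1))
    beta_reduce at h
    have hcg : Bexp n q (fun m => (J n - J ((m+1)-1)) / ((m:ℝ) + 1)) = EAB := by
      apply Bexp_congr
      intro m
      rw [Nat.add_sub_cancel, mul_one_div]
    rw [hcg] at h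
    have hf0 : J n - J (0-1) = J n := by norm_num [J_zero]
    rw [hf0] at h
    have hdec : Bexp (n+1) q (fun k => J n - J (k-1))
        = Bexp (n+1) q (fun k => J n - J k) + R := by
      rw [hRdef, ← Bexp_add]
      exact Bexp_congr _ _ _ _ (fun k => by ring)
    have hsub : Bexp n q (fun m => J n - J (m+1)) = EA - EB := by
      have hpt : ∀ m : ℕ, J n - J (m+1) = (J n - J m) + (-1 : ℝ) * (1 / ((m:ℝ)+1)) := by
        intro m; rw [J_succ]; ring
      rw [Bexp_congr _ _ _ _ hpt, Bexp_add, Bexp_smul]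
      ring
    have hpas := Bexp_pascal n q (fun k => J n - J k)
    beta_reduce at hpas
    rw [hsub] at hpas
    rw [hdec, hpas] at h
    rw [h]; ring
  have hR0 : 0 ≤ R := Bexp_nonneg (n+1) q _ hq.le hq1 (fun k _ => J_diff_nonneg k)
  have hRle : R ≤ 2 * Bexp (n+1) q (fun k => 1 / ((k:ℝ)+1)) := by
    rw [hRdef, ← Bexp_smul]
    exact Bexp_mono (n+1) q _ _ hq.le hq1 (fun k _ => J_diff_le k)
  have hxR0 : 0 ≤ x * R := mul_nonneg hx.le hR0
  have hxR2 : x * R ≤ 2 := by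
    nlinarith [mul_le_mul_of_nonneg_left hRle hx.le]
  -- Bernoulli
  have hbern : x * (1-q)^(n+1) ≤ 1 := by
    have h1 : 1 + ((n+1:ℕ):ℝ) * q ≤ (1+q)^(n+1) := one_add_mul_le_pow (by linarith) (n+1)
    have h2 : ((1-q)*(1+q))^(n+1) ≤ 1 := pow_le_one₀ (by nlinarith) (by nlinarith)
    rw [mul_pow] at h2
    have h3 : (1-q)^(n+1) * (1 + ((n+1:ℕ):ℝ) * q) ≤ 1 := by
      nlinarith [mul_le_mul_of_nonneg_left h1 hw0]
    have hxle : x ≤ 1 + ((n+1:ℕ):ℝ) * q := by push_cast; nlinarith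
    nlinarith [mul_nonneg (sub_nonneg.mpr hxle) hw0]
  have hxw0 : 0 ≤ x * (1-q)^(n+1) := mul_nonneg hx.le hw0
  have hxwJ0 : 0 ≤ (x * (1-q)^(n+1)) * (J n - EA) := mul_nonneg hxw0 (by linarith)
  have hxwJ1 : (x * (1-q)^(n+1)) * (J n - EA) ≤ J n := by
    nlinarith [mul_nonneg (sub_nonneg.mpr hbern) (sub_nonneg.mpr hEA1)]
  have hqx0 : 0 ≤ q * (x * EB) := mul_nonneg hq.le hxEB0
  have hqx1 : q * (x * EB) ≤ 1 := by
    calc q * (x * EB) ≤ 1 * (x * EB) := mul_le_mul_of_nonneg_right hq1 hxEB0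
      _ = x * EB := one_mul _
      _ ≤ 1 := hxEB1
  have hxEBsq : (x * EB)^2 ≤ 1 := pow_le_one₀ hxEB0 hxEB1
  have hxEBsq0 : 0 ≤ (x * EB)^2 := sq_nonneg _
  -- covariance identity
  have hcov : x * x * (EAB - EA * EB)
      = -(q * (x * EB)) + x * R - (x * (1-q)^(n+1)) * (J n - EA) := by
    linear_combination x * hb3 - (x * EA) * hb1
  have hSx : (EB2 - EB ^ 2 - 2 * (EAB - EA * EB)) * x^2
      = (x * (x * EB2) - (x * EB)^2) + 2 * (q * (x * EB)) - 2 * (x * R)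
        + 2 * ((x * (1-q)^(n+1)) * (J n - EA)) := by
    linear_combination (-2 : ℝ) * hcov
  have hfine : |EB2 - EB ^ 2 - 2 * (EAB - EA * EB)| * x^2 ≤ 6 + 2 * J n := by
    have habs : |EB2 - EB ^ 2 - 2 * (EAB - EA * EB)| * x^2
        = |(EB2 - EB ^ 2 - 2 * (EAB - EA * EB)) * x^2| := by
      rw [abs_mul, abs_of_nonneg (by positivity : (0:ℝ) ≤ x^2)]
    rw [habs, hSx, abs_le]
    constructor
    · linarith
    · linarith
  -- conclude
  rcases le_total (1:ℝ) (x⁻¹^2) with hmin | hmin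
  · rw [min_eq_left hmin]
    calc |EB2 - EB ^ 2 - 2 * (EAB - EA * EB)| ≤ 2 + 4 * J n := hcrude
      _ ≤ (8 + 4 * J n) * 1 := by linarith
  · rw [min_eq_right hmin]
    have hxx : x^2 * x⁻¹^2 = 1 := by field_simp
    have h1 : |EB2 - EB ^ 2 - 2 * (EAB - EA * EB)|
        = (|EB2 - EB ^ 2 - 2 * (EAB - EA * EB)| * x^2) * x⁻¹^2 := by
      rw [mul_assoc, hxx, mul_one]
    rw [h1]
    have h2 : |EB2 - EB ^ 2 - 2 * (EAB - EA * EB)| * x^2 ≤ 8 + 4 * J n :=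
      le_trans hfine (by linarith)
    exact mul_le_mul_of_nonneg_right h2 (by positivity)

lemma rpow_step (r a : ℝ) (hr : 1 ≤ r) (ha : 1 ≤ a) :
    (a+1)^(-(r+1)) * r ≤ a^(-r) - (a+1)^(-r) := by
  have ha0 : (0:ℝ) < a := by linarith
  have ha1 : (0:ℝ) < a + 1 := by linarith
  have hA : (0:ℝ) < a ^ r := Real.rpow_pos_of_pos ha0 r
  have hB : (0:ℝ) < (a+1) ^ r := Real.rpow_pos_of_pos ha1 r
  have hu0 : (0:ℝ) < a ^ (-r) := Real.rpow_pos_of_pos ha0 _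
  have hv0 : (0:ℝ) < (a+1) ^ (-r) := Real.rpow_pos_of_pos ha1 _
  have hu : a ^ r * a ^ (-r) = 1 := by
    rw [← Real.rpow_add ha0]; simp
  have hv : (a+1) ^ r * (a+1) ^ (-r) = 1 := by
    rw [← Real.rpow_add ha1]; simp
  have hw : (a+1)^(-(r+1)) = (a+1)^(-r) * (a+1)⁻¹ := by
    rw [show -(r+1) = -r + (-1) by ring, Real.rpow_add ha1, Real.rpow_neg_one]
  have hber : 1 + r * (1/a) ≤ (1 + 1/a) ^ r := by
    apply one_add_mul_self_le_rpow_one_add _ hr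
    have : (0:ℝ) ≤ 1/a := by positivity
    linarith
  have hfrac : (1 + 1/a) = (a+1)/a := by field_simp
  have hdiv : ((a+1)/a) ^ r = (a+1)^r / a^r := Real.div_rpow ha1.le ha0.le r
  rw [hfrac, hdiv] at hber
  have hber2 : (1 + r * (1/a)) * a^r ≤ (a+1)^r := (le_div_iff₀ hA).mp hber
  have m1 := mul_le_mul_of_nonneg_right hber2 (mul_nonneg hu0.le hv0.le)
  have e2 : (1 + r*(1/a)) * a^r * (a^(-r) * (a+1)^(-r)) = (1 + r*(1/a)) * (a+1)^(-r) := by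
    linear_combination ((1 + r*(1/a)) * (a+1)^(-r)) * hu
  have e3 : (a+1)^r * (a^(-r) * (a+1)^(-r)) = a^(-r) := by
    linear_combination (a^(-r)) * hv
  rw [e2, e3] at m1
  have hia : (a+1)⁻¹ ≤ 1/a := by
    rw [one_div]
    exact inv_anti₀ ha0 (by linarith)
  have hlast : (a+1)^(-(r+1)) * r ≤ r * (1/a) * (a+1)^(-r) := by
    rw [hw]
    nlinarith [mul_le_mul_of_nonneg_left hia (mul_nonneg (by linarith : (0:ℝ) ≤ r) hv0.le)]
  nlinarith [m1, hlast]

lemma tail_partial (r : ℝ) (hr : 1 ≤ r) (K : ℕ) (hK : 1 ≤ K) (L : ℕ) :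
    ∑ i ∈ Finset.range L, ((K:ℝ)+(i:ℝ)+1)^(-(r+1)) ≤ ((K:ℝ))^(-r) / r := by
  have hr0 : (0:ℝ) < r := by linarith
  have hstep : ∀ i ∈ Finset.range L, ((K:ℝ)+(i:ℝ)+1)^(-(r+1))
      ≤ (((K:ℝ)+(i:ℝ))^(-r) - ((K:ℝ)+((i:ℕ)+1:ℕ))^(-r)) / r := by
    intro i _
    rw [le_div_iff₀ hr0]
    have ha : (1:ℝ) ≤ (K:ℝ)+(i:ℝ) := by
      have : (1:ℝ) ≤ (K:ℝ) := by exact_mod_cast hK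
      have : (0:ℝ) ≤ (i:ℝ) := Nat.cast_nonneg i
      linarith
    have := rpow_step r ((K:ℝ)+(i:ℝ)) hr ha
    push_cast
    rw [← add_assoc]
    linarith [this]
  calc ∑ i ∈ Finset.range L, ((K:ℝ)+(i:ℝ)+1)^(-(r+1))
      ≤ ∑ i ∈ Finset.range L, ((((K:ℝ)+(i:ℝ))^(-r) - ((K:ℝ)+((i:ℕ)+1:ℕ))^(-r)) / r) :=
        Finset.sum_le_sum hstep
    _ = (∑ i ∈ Finset.range L, (((K:ℝ)+(i:ℝ))^(-r) - ((K:ℝ)+((i:ℕ)+1:ℕ))^(-r))) / r :=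
        by rw [Finset.sum_div]
    _ = (((K:ℝ)+((0:ℕ):ℝ))^(-r) - ((K:ℝ)+((L:ℕ):ℝ))^(-r)) / r := by
        rw [Finset.sum_range_sub' (fun i : ℕ => ((K:ℝ)+(i:ℝ))^(-r)) L]
    _ ≤ ((K:ℝ))^(-r) / r := by
        have hB : (0:ℝ) ≤ ((K:ℝ)+(L:ℝ))^(-r) := Real.rpow_nonneg (by positivity) _
        simp only [Nat.cast_zero, add_zero]
        gcongr
        linarith

lemma J_eq_harmonic (n : ℕ) : J n = (harmonic n : ℝ) := by
  rw [J, harmonic]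
  push_cast
  exact Finset.sum_congr rfl (fun k _ => by rw [one_div])

lemma J_le_log (n : ℕ) : J n ≤ 1 + Real.log n := by
  rw [J_eq_harmonic]; exact harmonic_le_one_add_log n

set_option maxHeartbeats 1000000 in
/-- remainder terms from tied sample points. Let `p` be a nonincreasing
pmf with `p j ≤ M j^{−1/α}`, `M > 0`, `α ∈ (0,1)`, and conditionally on `X = j` let
`m_X ~ Binomial(n, p j)`. Then
`|E_X[p(X)(Var[1/(m_X+1)|X] − 2 Cov[J(n) − J(m_X), 1/(m_X+1)|X])]| ≤ C (log n)/n^{2−α}`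
for all `n ≥ 2`. -/
theorem tied_points_remainder (p : ℕ+ → ℝ)
    (hp0 : ∀ j, 0 ≤ p j) (hsum : ∑' j, p j = 1) (hmono : Antitone p)
    (M α : ℝ) (hM : 0 < M) (hα : α ∈ Set.Ioo (0 : ℝ) 1)
    (hbound : ∀ j : ℕ+, p j ≤ M * (j : ℝ) ^ (-(1 / α))) :
    ∃ C > 0, ∀ n : ℕ, 2 ≤ n →
      |∑' j : ℕ+, p j * (p j *
          ((Bexp n (p j) (fun m => (1 / (m + 1 : ℝ)) ^ 2)
              - (Bexp n (p j) (fun m => 1 / (m + 1 : ℝ))) ^ 2)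
            - 2 * (Bexp n (p j) (fun m => (J n - J m) * (1 / (m + 1 : ℝ)))
              - Bexp n (p j) (fun m => J n - J m)
                * Bexp n (p j) (fun m => 1 / (m + 1 : ℝ)))))|
        ≤ C * Real.log n / (n : ℝ) ^ (2 - α) := by
  obtain ⟨hα0, hα1⟩ := hα
  set r : ℝ := (2 - α)/α with hrdef
  have hr1 : (1:ℝ) ≤ r := by rw [hrdef, le_div_iff₀ hα0]; linarith
  have hr0 : (0:ℝ) < r := by linarith
  have hc0 : (0:ℝ) < 1 + M^2 * (2:ℝ)^r / r := by positivity
  have hlog2 : (0:ℝ) < Real.log 2 := Real.log_pos (by norm_num)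
  refine ⟨(1 + M^2 * (2:ℝ)^r / r) * (12 / Real.log 2 + 4), by positivity, ?_⟩
  intro n hn
  have hn2 : (2:ℝ) ≤ (n:ℝ) := by exact_mod_cast hn
  have hn1 : (1:ℝ) ≤ (n:ℝ) := by linarith
  have hn0 : (0:ℝ) < (n:ℝ) := by linarith
  have hlogn : Real.log 2 ≤ Real.log n := Real.log_le_log (by norm_num) hn2
  have hlogn0 : (0:ℝ) < Real.log n := lt_of_lt_of_le hlog2 hlogn
  have hsp : Summable p := by
    by_contra hcon
    rw [tsum_eq_zero_of_not_summable hcon] at hsum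
    norm_num at hsum
  have hp1 : ∀ j, p j ≤ 1 := by
    intro j
    have h := Summable.le_tsum hsp j (fun k _ => hp0 k)
    rw [hsum] at h
    exact h
  set K : ℝ := 8 + 4 * J n with hKdef
  have hK0 : (0:ℝ) < K := by
    have := J_nonneg n
    rw [hKdef]; linarith
  set t : ℕ+ → ℝ := fun j => p j * (p j *
          ((Bexp n (p j) (fun m => (1 / (m + 1 : ℝ)) ^ 2)
              - (Bexp n (p j) (fun m => 1 / (m + 1 : ℝ))) ^ 2)
            - 2 * (Bexp n (p j) (fun m => (J n - J m) * (1 / (m + 1 : ℝ)))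
              - Bexp n (p j) (fun m => J n - J m)
                * Bexp n (p j) (fun m => 1 / (m + 1 : ℝ))))) with htdef
  set g : ℕ+ → ℝ := fun j => K * min ((p j)^2) ((((n:ℝ)+1))⁻¹^2) with hgdef
  have hg0 : ∀ j, 0 ≤ g j := by
    intro j
    exact mul_nonneg hK0.le (le_min (sq_nonneg _) (by positivity))
  have hpt : ∀ j, |t j| ≤ g j := by
    intro j
    rcases eq_or_lt_of_le (hp0 j) with hz | hq
    · have htz : t j = 0 := by rw [htdef]; simp [← hz]
      rw [htz, abs_zero]
      exact hg0 j
    · have hkey := key n (p j) hq (hp1 j)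
      have ht : |t j| = (p j)^2 *
          |(Bexp n (p j) (fun m => (1 / (m + 1 : ℝ)) ^ 2)
              - (Bexp n (p j) (fun m => 1 / (m + 1 : ℝ))) ^ 2)
            - 2 * (Bexp n (p j) (fun m => (J n - J m) * (1 / (m + 1 : ℝ)))
              - Bexp n (p j) (fun m => J n - J m)
                * Bexp n (p j) (fun m => 1 / (m + 1 : ℝ)))| := by
        rw [htdef]
        rw [abs_mul, abs_mul, abs_of_nonneg (hp0 j)]
        ring
      rw [ht]
      have hy : (p j)^2 * min 1 (((((n:ℝ)+1) * p j)⁻¹)^2)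
          = min ((p j)^2) ((((n:ℝ)+1))⁻¹^2) := by
        rw [mul_min_of_nonneg _ _ (sq_nonneg (p j))]
        congr 1
        · exact mul_one _
        · rw [mul_inv, mul_pow]
          field_simp
      calc (p j)^2 * |_| ≤ (p j)^2 * (K * min 1 (((((n:ℝ)+1) * p j)⁻¹)^2)) :=
            mul_le_mul_of_nonneg_left hkey (sq_nonneg _)
        _ = K * ((p j)^2 * min 1 (((((n:ℝ)+1) * p j)⁻¹)^2)) := by ring
        _ = g j := by rw [hy, hgdef]
  have hsq_le : ∀ j, (p j)^2 ≤ p j := by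
    intro j
    have := mul_le_mul_of_nonneg_left (hp1 j) (hp0 j)
    calc (p j)^2 = p j * p j := sq (p j) ▸ rfl
      _ ≤ p j * 1 := this
      _ = p j := mul_one _
  have hsg : Summable g := by
    apply Summable.of_nonneg_of_le hg0 ?_ (hsp.mul_left K)
    intro j
    rw [hgdef]
    apply mul_le_mul_of_nonneg_left ?_ hK0.le
    exact le_trans (min_le_left _ _) (hsq_le j)
  have htabs : Summable (fun j => |t j|) :=
    Summable.of_nonneg_of_le (fun j => abs_nonneg _) hpt hsg
  have hst : Summable t := htabs.of_abs
  -- the split of the tsum of mins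
  set K' : ℕ := ⌊(n:ℝ)^α⌋₊ with hK'def
  have hnα1 : (1:ℝ) ≤ (n:ℝ)^α := by
    calc (1:ℝ) = (n:ℝ)^(0:ℝ) := (Real.rpow_zero _).symm
      _ ≤ (n:ℝ)^α := Real.rpow_le_rpow_of_exponent_le hn1 hα0.le
  have hK'1 : 1 ≤ K' := (Nat.one_le_floor_iff _).mpr hnα1
  have hK'le : (K':ℝ) ≤ (n:ℝ)^α := Nat.floor_le (by positivity)
  have hK'ge : (n:ℝ)^α / 2 ≤ (K':ℝ) := by
    rcases le_total ((n:ℝ)^α) 2 with h | h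
    · have h1 : (1:ℝ) ≤ (K':ℝ) := by exact_mod_cast hK'1
      linarith
    · have := Nat.sub_one_lt_floor ((n:ℝ)^α)
      linarith
  set F : ℕ → ℝ := fun i => min ((p (Equiv.pnatEquivNat.symm i))^2) ((((n:ℝ)+1))⁻¹^2) with hFdef
  have hsmin : Summable (fun j : ℕ+ => min ((p j)^2) ((((n:ℝ)+1))⁻¹^2)) := by
    apply Summable.of_nonneg_of_le (fun j => le_min (sq_nonneg _) (by positivity)) ?_ hsp
    intro j
    exact le_trans (min_le_left _ _) (hsq_le j)
  have hsF : Summable F :=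
    Summable.comp_injective hsmin (Equiv.pnatEquivNat.symm.injective)
  have htsum_eq : ∑' j : ℕ+, min ((p j)^2) ((((n:ℝ)+1))⁻¹^2) = ∑' i : ℕ, F i :=
    (Equiv.pnatEquivNat.symm.tsum_eq _).symm
  have hsplit := Summable.sum_add_tsum_nat_add K' hsF
  have hhead : ∑ i ∈ Finset.range K', F i ≤ (n:ℝ)^(α - 2) := by
    have h1 : ∀ i ∈ Finset.range K', F i ≤ (((n:ℝ)+1))⁻¹^2 := fun i _ => min_le_right _ _
    calc ∑ i ∈ Finset.range K', F i ≤ (K' : ℝ) * ((((n:ℝ)+1))⁻¹^2) := by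
          have h2 := Finset.sum_le_card_nsmul (Finset.range K') F _ h1
          simpa using h2
      _ ≤ (n:ℝ)^α * ((n:ℝ)^(2:ℝ))⁻¹ := by
          apply mul_le_mul hK'le ?_ (by positivity) (by positivity)
          rw [show ((2:ℝ)) = ((2:ℕ):ℝ) by norm_num, Real.rpow_natCast, ← inv_pow]
          apply pow_le_pow_left₀ (by positivity)
          apply inv_anti₀ hn0
          linarith
      _ = (n:ℝ)^(α-2) := by
          rw [← Real.rpow_neg hn0.le, ← Real.rpow_add hn0]
          ring_nf
  have hr2 : r + 1 = 2/α := by rw [hrdef]; field_simp; ring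
  have htail : ∑' i : ℕ, F (i + K') ≤ M^2 * ((K':ℝ))^(-r) / r := by
    apply Summable.tsum_le_of_sum_range_le (hsF.comp_injective (add_left_injective K'))
    intro L
    have hterm : ∀ i ∈ Finset.range L, F (i + K')
        ≤ M^2 * ((K':ℝ)+(i:ℝ)+1)^(-(r+1)) := by
      intro i _
      have hco : ((Equiv.pnatEquivNat.symm (i + K') : ℕ+) : ℝ) = (K':ℝ)+(i:ℝ)+1 := by
        rw [show ((Equiv.pnatEquivNat.symm (i + K') : ℕ+) : ℝ)
            = (((Equiv.pnatEquivNat.symm (i + K') : ℕ+) : ℕ) : ℝ) from rfl,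
          show ((Equiv.pnatEquivNat.symm (i + K') : ℕ+) : ℕ) = i + K' + 1 from rfl]
        push_cast; ring
      have hpb := hbound (Equiv.pnatEquivNat.symm (i + K'))
      have hK'R : (1:ℝ) ≤ (K':ℝ) := by exact_mod_cast hK'1
      have hi0 : (0:ℝ) ≤ (i:ℝ) := Nat.cast_nonneg i
      have hbase0 : (0:ℝ) < (K':ℝ)+(i:ℝ)+1 := by linarith
      calc F (i + K') ≤ (p (Equiv.pnatEquivNat.symm (i + K')))^2 := min_le_left _ _
        _ ≤ (M * (((K':ℝ)+(i:ℝ)+1)) ^ (-(1/α)))^2 := by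
            rw [hco] at hpb
            exact pow_le_pow_left₀ (hp0 _) hpb 2
        _ = M^2 * ((K':ℝ)+(i:ℝ)+1)^(-(r+1)) := by
            rw [mul_pow]
            congr 1
            rw [← Real.rpow_natCast ((((K':ℝ)+(i:ℝ)+1)) ^ (-(1/α))) 2,
              ← Real.rpow_mul hbase0.le]
            congr 1
            push_cast
            rw [show -(1/α) * 2 = -(2/α) by ring, ← hr2]
    calc ∑ i ∈ Finset.range L, F (i+K')
        ≤ ∑ i ∈ Finset.range L, M^2 * ((K':ℝ)+(i:ℝ)+1)^(-(r+1)) := Finset.sum_le_sum hterm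
      _ = M^2 * ∑ i ∈ Finset.range L, ((K':ℝ)+(i:ℝ)+1)^(-(r+1)) := by rw [Finset.mul_sum]
      _ ≤ M^2 * (((K':ℝ))^(-r)/r) :=
          mul_le_mul_of_nonneg_left (tail_partial r hr1 K' hK'1 L) (by positivity)
      _ = M^2 * ((K':ℝ))^(-r)/r := by ring
  have hKr : ((K':ℝ))^(-r) ≤ (2:ℝ)^r * (n:ℝ)^(α-2) := by
    have h1 : ((K':ℝ))^(-r) ≤ ((n:ℝ)^α/2)^(-r) :=
      Real.rpow_le_rpow_of_nonpos (by positivity) hK'ge (by linarith)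
    have h2 : ((n:ℝ)^α/2)^(-r) = ((n:ℝ)^α)^(-r) / (2:ℝ)^(-r) :=
      Real.div_rpow (by positivity) (by norm_num) _
    have h3 : ((n:ℝ)^α)^(-r) = (n:ℝ)^(α-2) := by
      have hx : α * (-r) = α - 2 := by
        rw [hrdef]
        field_simp
        ring
      rw [← Real.rpow_mul hn0.le, hx]
    have h4 : (2:ℝ)^(-r) = ((2:ℝ)^r)⁻¹ := Real.rpow_neg (by norm_num) r
    calc ((K':ℝ))^(-r) ≤ ((n:ℝ)^α/2)^(-r) := h1
      _ = (2:ℝ)^r * (n:ℝ)^(α-2) := by rw [h2, h3, h4, div_eq_mul_inv, inv_inv, mul_comm]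
  have htail2 : ∑' i : ℕ, F (i + K') ≤ M^2 * ((2:ℝ)^r * (n:ℝ)^(α-2)) / r := by
    apply le_trans htail
    gcongr
  have hminsum : ∑' j : ℕ+, min ((p j)^2) ((((n:ℝ)+1))⁻¹^2)
      ≤ (1 + M^2 * (2:ℝ)^r / r) * (n:ℝ)^(α-2) := by
    rw [htsum_eq, ← hsplit]
    calc ∑ i ∈ Finset.range K', F i + ∑' i : ℕ, F (i + K')
        ≤ (n:ℝ)^(α-2) + M^2 * ((2:ℝ)^r * (n:ℝ)^(α-2)) / r := add_le_add hhead htail2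
      _ = (1 + M^2 * (2:ℝ)^r / r) * (n:ℝ)^(α-2) := by ring
  have hKle : K ≤ (12/Real.log 2 + 4) * Real.log n := by
    have hJle := J_le_log n
    have h12 : (12:ℝ) ≤ 12 / Real.log 2 * Real.log n := by
      rw [div_mul_eq_mul_div, le_div_iff₀ hlog2]
      nlinarith
    rw [hKdef]; nlinarith
  have hnorm : |∑' j, t j| ≤ ∑' j, |t j| := by
    have h := norm_tsum_le_tsum_norm (f := t) (by simpa [Real.norm_eq_abs] using htabs)
    simpa [Real.norm_eq_abs] using h
  calc |∑' j, t j| ≤ ∑' j, |t j| := hnorm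
    _ ≤ ∑' j, g j := Summable.tsum_le_tsum hpt htabs hsg
    _ = K * ∑' j : ℕ+, min ((p j)^2) ((((n:ℝ)+1))⁻¹^2) := by rw [hgdef]; exact tsum_mul_left
    _ ≤ K * ((1 + M^2 * (2:ℝ)^r / r) * (n:ℝ)^(α-2)) := mul_le_mul_of_nonneg_left hminsum hK0.le
    _ ≤ ((12/Real.log 2 + 4) * Real.log n) * ((1 + M^2 * (2:ℝ)^r / r) * (n:ℝ)^(α-2)) :=
        mul_le_mul_of_nonneg_right hKle (by positivity)
    _ = (1 + M^2 * (2:ℝ)^r / r) * (12 / Real.log 2 + 4) * Real.log n / (n:ℝ)^(2-α) := by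
        rw [show α - 2 = -(2-α) by ring, Real.rpow_neg hn0.le]
        ring
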